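/- For all integers $L\ge 0$ and formal variables $q,z$, the identity $\sum_{l\ge 0}\frac{(q^{l+1}z)_\infty}{(q)_l}q^{l(l-2L)}z^l=\sum_{s=0}^{2L}\begin{bmatrix}2L\\ s\end{bmatrix}_{q^{-1}}z^s$ holds as formal power series in $z$ over $\mathbb{C}(q)$ (equivalently over formal Laurent series in $q$), where $(z)_n=\prod_{j=0}^{n-1}(1-q^jz)$, $(z)_\infty=\prod_{j\ge 0}(1-q^jz)$, and $\begin{bmatrix}m\\ n\end{bmatrix}_{q^{-1}}$ is the Gaussian binomial coefficient evaluated at $q^{-1}$. -/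

import Mathlib

noncomputable section

set_option maxHeartbeats 1000000

/-- The formal variable `q`, inside the field of formal Laurent series `ℂ((q))`. -/
def qvar : LaurentSeries ℂ := HahnSeries.single (1 : ℤ) (1 : ℂ)

/-- The `q`-Pochhammer symbol `(q)_m = ∏_{j=1}^{m} (1 - q^j)`. -/
def qPoch (m : ℕ) : LaurentSeries ℂ := ∏ j ∈ Finset.range m, (1 - qvar ^ (j + 1))

/-- The Gaussian binomial coefficient `[M, k]_x = (x)_M / ((x)_k (x)_{M-k})` evaluated at a
given `x` (for `k ≤ M`). -/
def gaussAt (x : LaurentSeries ℂ) (M k : ℕ) : LaurentSeries ℂ :=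
  (∏ j ∈ Finset.range M, (1 - x ^ (j + 1))) /
    ((∏ j ∈ Finset.range k, (1 - x ^ (j + 1))) *
      ∏ j ∈ Finset.range (M - k), (1 - x ^ (j + 1)))

/-- The coefficient of `z^k` in the infinite product `(q^{l+1} z)_∞ = ∏_{j≥0}(1-q^{l+1+j}z)`:
it is `(-1)^k ∑ q^{j₁+⋯+j_k}` over subsets `{j₁<⋯<j_k} ⊆ {l+1, l+2, …}`. -/
def coeffPochInf (l k : ℕ) : LaurentSeries ℂ :=
  (-1 : LaurentSeries ℂ) ^ k *
    ∑' S : {S : Finset ℕ // S.card = k}, ∏ j ∈ S.1, qvar ^ (l + 1 + j)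

lemma qvar_ne_zero : qvar ≠ 0 := by
  simp [qvar, HahnSeries.single_ne_zero]

lemma qvar_npow (n : ℕ) : qvar ^ n = HahnSeries.single (n : ℤ) (1 : ℂ) := by
  induction n with
  | zero => simp [HahnSeries.single_zero_one]
  | succ n ih =>
    rw [pow_succ, ih, qvar, HahnSeries.single_mul_single]
    push_cast; ring_nf

lemma qvar_zpow (n : ℤ) : qvar ^ n = HahnSeries.single n (1 : ℂ) := by
  rcases n with m | m
  · rw [Int.ofNat_eq_coe, zpow_natCast, qvar_npow]
  · have h : (HahnSeries.single (Int.negSucc m) (1 : ℂ) : LaurentSeries ℂ) *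
        qvar ^ (m + 1 : ℕ) = 1 := by
      rw [qvar_npow, HahnSeries.single_mul_single, one_mul]
      have : (Int.negSucc m) + ((m + 1 : ℕ) : ℤ) = 0 := by
        simp [Int.negSucc_eq]
      rw [this, HahnSeries.single_zero_one]
    have := eq_inv_of_mul_eq_one_left h
    rw [zpow_negSucc, ← this]

lemma qvar_zpow_val (n : ℤ) :
    Valued.v (qvar ^ n) = Multiplicative.ofAdd (-n) := by
  rw [qvar_zpow]; exact LaurentSeries.valuation_single_zpow (K := ℂ) n

lemma qvar_zpow_add (a b : ℤ) : qvar ^ (a + b) = qvar ^ a * qvar ^ b :=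
  zpow_add₀ qvar_ne_zero a b

lemma one_sub_qvar_zpow_ne_zero {n : ℤ} (hn : n ≠ 0) : (1 : LaurentSeries ℂ) - qvar ^ n ≠ 0 := by
  intro h
  have h0 : ((1 : LaurentSeries ℂ) - qvar ^ n).coeff 0 = 1 := by
    rw [HahnSeries.coeff_sub, qvar_zpow, HahnSeries.coeff_one, HahnSeries.coeff_single_of_ne hn.symm]
    simp
  rw [h] at h0; simp at h0

lemma qPoch_factor (j : ℕ) : (1 : LaurentSeries ℂ) - qvar ^ (j+1) ≠ 0 := by
  have := one_sub_qvar_zpow_ne_zero (n := (j+1 : ℕ)) (by positivity)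
  rwa [zpow_natCast] at this

lemma qPoch_ne_zero (m : ℕ) : qPoch m ≠ 0 :=
  Finset.prod_ne_zero_iff.mpr fun j _ => qPoch_factor j

lemma qPoch_succ (m : ℕ) : qPoch (m+1) = qPoch m * (1 - qvar ^ (m+1)) :=
  Finset.prod_range_succ _ m

lemma qvar_npow_val (n : ℕ) :
    Valued.v (qvar ^ n) = Multiplicative.ofAdd (-(n:ℤ)) := by
  rw [qvar_npow]; exact LaurentSeries.valuation_single_zpow (K := ℂ) n

-- the weight of a term
lemma prodF_eq (l : ℕ) (S : Finset ℕ) :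
    ∏ j ∈ S, qvar ^ (l + 1 + j) = qvar ^ (∑ j ∈ S, (l + 1 + j)) :=
  Finset.prod_pow_eq_pow_sum S _ _

lemma summableF (l k : ℕ) :
    Summable (fun S : {S : Finset ℕ // S.card = k} => ∏ j ∈ S.1, qvar ^ (l + 1 + j)) := by
  rw [summable_iff_vanishing]
  intro e he
  obtain ⟨γ0, hγ0⟩ := Valued.mem_nhds_zero.mp he
  set γ : (WithZero (Multiplicative ℤ))ˣ := Units.mk0 (MonoidWithZeroHom.ValueGroup₀.embedding γ0.1)
    ((map_ne_zero_iff _ MonoidWithZeroHom.ValueGroup₀.embedding_injective).mpr γ0.ne_zero)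
  have hγ : {x | Valued.v x < γ.1} ⊆ e := fun x hx =>
    hγ0 ((Valuation.restrict_lt_iff_lt_embedding (v := Valued.v)).mpr hx)
  obtain ⟨D, hD⟩ : ∃ D : ℕ,
      ((Multiplicative.ofAdd (-(D:ℤ)) : Multiplicative ℤ) : WithZero (Multiplicative ℤ)) < γ := by
    obtain ⟨m, hm⟩ := WithZero.ne_zero_iff_exists.mp γ.ne_zero
    refine ⟨(Multiplicative.toAdd m).natAbs + 1, ?_⟩
    rw [← hm, WithZero.coe_lt_coe, ← Multiplicative.toAdd_lt]
    simp only [toAdd_ofAdd]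
    omega
  have hfin : {S : {S : Finset ℕ // S.card = k} | S.1 ⊆ Finset.range D}.Finite := by
    have : Set.Finite {T : Finset ℕ | T ⊆ Finset.range D} := by
      have := ((Finset.range D).powerset).finite_toSet
      convert this using 1
      ext T; simp only [Finset.coe_powerset, Set.mem_preimage, Set.mem_powerset_iff, Finset.coe_subset, Set.mem_setOf_eq, Finset.mem_coe, Finset.mem_powerset]
    exact Set.Finite.preimage (Set.injOn_of_injective Subtype.val_injective) this
  refine ⟨hfin.toFinset, fun t ht => ?_⟩
  apply hγ
  simp only [Set.mem_setOf_eq]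
  refine lt_of_le_of_lt (Valuation.map_sum_le _ (fun S hS => ?_)) hD
  -- each term in t has weight ≥ D
  have hS' : ¬ (S.1 ⊆ Finset.range D) := by
    intro hsub
    exact (Finset.disjoint_left.mp ht hS) (hfin.mem_toFinset.mpr hsub)
  obtain ⟨j, hjS, hjD⟩ : ∃ j ∈ S.1, D ≤ j := by
    by_contra hcon
    push_neg at hcon
    exact hS' (fun x hx => Finset.mem_range.mpr (hcon x hx))
  rw [prodF_eq, qvar_npow_val]
  have hw : D ≤ ∑ j ∈ S.1, (l + 1 + j) := by
    calc D ≤ l + 1 + j := by omega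
    _ ≤ ∑ j ∈ S.1, (l + 1 + j) := Finset.single_le_sum (f := fun j => l+1+j) (fun _ _ => Nat.zero_le _) hjS
  rw [WithZero.coe_le_coe, Multiplicative.ofAdd_le]
  omega

def succEmb : ℕ ↪ ℕ := ⟨Nat.succ, Nat.succ_injective⟩

lemma zero_not_mem_map_succ (S : Finset ℕ) : 0 ∉ S.map succEmb := by
  simp [succEmb]

def zeroSet (k : ℕ) : Set {S : Finset ℕ // S.card = k + 1} := {T | (0:ℕ) ∈ T.1}

lemma preimage_eq {T : Finset ℕ} (h0 : 0 ∉ T) : (T.image (· - 1)).map succEmb = T := by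
  ext a
  simp only [Finset.mem_map, Finset.mem_image, succEmb, Function.Embedding.coeFn_mk]
  constructor
  · rintro ⟨b, ⟨c, hc, rfl⟩, rfl⟩
    have : c ≠ 0 := fun h => h0 (h ▸ hc)
    have : c - 1 + 1 = c := by omega
    rw [Nat.succ_eq_add_one, this]; exact hc
  · intro ha
    have : a ≠ 0 := fun h => h0 (h ▸ ha)
    exact ⟨a - 1, ⟨a, ha, rfl⟩, by omega⟩

lemma card_image_pred {T : Finset ℕ} (h0 : 0 ∉ T) : (T.image (· - 1)).card = T.card := by
  apply Finset.card_image_of_injOn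
  intro a ha b hb hab
  have ha' : a ≠ 0 := fun h => h0 (h ▸ ha)
  have hb' : b ≠ 0 := fun h => h0 (h ▸ hb)
  simp only at hab
  omega

/-- subsets of card k ≃ subsets of card (k+1) containing 0 -/
def eqA (k : ℕ) : {S : Finset ℕ // S.card = k} ≃ zeroSet k := by
  apply Equiv.ofBijective (fun S => ⟨⟨insert 0 (S.1.map succEmb),
    by rw [Finset.card_insert_of_notMem (zero_not_mem_map_succ _), Finset.card_map, S.2]⟩,
    by simp [zeroSet]⟩)
  constructor
  · intro S S' h
    simp only [Subtype.mk.injEq] at h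
    apply Subtype.ext
    apply Finset.map_injective succEmb
    have h2 : (insert 0 (S.1.map succEmb)).erase 0 = (insert 0 (S'.1.map succEmb)).erase 0 := by
      have h' : insert 0 (S.1.map succEmb) = insert 0 (S'.1.map succEmb) := congrArg (fun x => x.1.1) h
      rw [h']
    rwa [Finset.erase_insert (zero_not_mem_map_succ _),
      Finset.erase_insert (zero_not_mem_map_succ _)] at h2
  · rintro ⟨⟨T, hT⟩, h0⟩
    simp only [zeroSet, Set.mem_setOf_eq] at h0
    have h0' : 0 ∉ T.erase 0 := Finset.notMem_erase 0 T
    refine ⟨⟨(T.erase 0).image (· - 1), ?_⟩, ?_⟩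
    · rw [card_image_pred h0', Finset.card_erase_of_mem h0, hT]; omega
    · apply Subtype.ext; apply Subtype.ext
      simp only
      rw [preimage_eq h0', Finset.insert_erase h0]

/-- subsets of card (k+1) ≃ subsets of card (k+1) not containing 0 -/
def eqB (k : ℕ) : {S : Finset ℕ // S.card = k + 1} ≃ ↥(zeroSet k)ᶜ := by
  apply Equiv.ofBijective (fun S => ⟨⟨S.1.map succEmb, by rw [Finset.card_map, S.2]⟩,
    by simp only [Set.mem_compl_iff, zeroSet, Set.mem_setOf_eq]; exact zero_not_mem_map_succ _⟩)
  constructor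
  · intro S S' h
    simp only [Subtype.mk.injEq] at h
    exact Subtype.ext (Finset.map_injective succEmb h)
  · rintro ⟨⟨T, hT⟩, h0⟩
    simp only [Set.mem_compl_iff, zeroSet, Set.mem_setOf_eq] at h0
    refine ⟨⟨T.image (· - 1), ?_⟩, ?_⟩
    · rw [card_image_pred h0, hT]
    · apply Subtype.ext; apply Subtype.ext
      simp only
      rw [preimage_eq h0]

lemma succEmb_apply (n : ℕ) : succEmb n = n + 1 := rfl

lemma eqA_apply (k : ℕ) (S : {S : Finset ℕ // S.card = k}) :
    ((eqA k S : {S : Finset ℕ // S.card = k + 1}) : Finset ℕ) = insert 0 (S.1.map succEmb) := rfl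

lemma eqB_apply (k : ℕ) (S : {S : Finset ℕ // S.card = k + 1}) :
    ((eqB k S : {S : Finset ℕ // S.card = k + 1}) : Finset ℕ) = S.1.map succEmb := rfl

lemma shift_prod (l k : ℕ) (S : {S : Finset ℕ // S.card = k}) :
    ∏ j ∈ S.1.map succEmb, qvar ^ (l + 1 + j) = qvar ^ k * ∏ j ∈ S.1, qvar ^ (l + 1 + j) := by
  rw [Finset.prod_map]
  have : ∀ j ∈ S.1, qvar ^ (l + 1 + succEmb j) = qvar ^ (l + 1 + j) * qvar := by
    intro j _
    rw [succEmb_apply, ← pow_succ]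
    ring_nf
  rw [Finset.prod_congr rfl this, Finset.prod_mul_distrib, Finset.prod_const, S.2, mul_comm]

lemma hasSumF (l k : ℕ) :
    HasSum (fun S : {S : Finset ℕ // S.card = k} => ∏ j ∈ S.1, qvar ^ (l + 1 + j))
      (qvar ^ (k * (l + 1) + Nat.choose k 2) / qPoch k) := by
  induction k with
  | zero =>
    have h : ∀ b : {S : Finset ℕ // S.card = 0}, b ≠ ⟨∅, Finset.card_empty⟩ →
        (∏ j ∈ b.1, qvar ^ (l + 1 + j)) = 0 := by
      intro b hb; exact absurd (Subtype.ext (Finset.card_eq_zero.mp b.2)) hb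
    have h2 := hasSum_single (f := fun S : {S : Finset ℕ // S.card = 0} =>
      ∏ j ∈ S.1, qvar ^ (l + 1 + j)) ⟨∅, Finset.card_empty⟩ h
    simpa [qPoch] using h2
  | succ k ih =>
    set g := ∑' S : {S : Finset ℕ // S.card = k + 1}, ∏ j ∈ S.1, qvar ^ (l + 1 + j) with hgdef
    have hgs : HasSum (fun S : {S : Finset ℕ // S.card = k + 1} =>
        ∏ j ∈ S.1, qvar ^ (l + 1 + j)) g := (summableF l (k+1)).hasSum
    set Tk := qvar ^ (k * (l + 1) + Nat.choose k 2) / qPoch k with hTk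
    have hA : HasSum ((fun T : {S : Finset ℕ // S.card = k + 1} =>
        ∏ j ∈ T.1, qvar ^ (l + 1 + j)) ∘ (↑) : zeroSet k → LaurentSeries ℂ)
        (qvar ^ (l + k + 1) * Tk) := by
      rw [← Equiv.hasSum_iff (eqA k)]
      have heq : (((fun T : {S : Finset ℕ // S.card = k + 1} =>
          ∏ j ∈ T.1, qvar ^ (l + 1 + j)) ∘ (↑)) ∘ eqA k) =
          fun S : {S : Finset ℕ // S.card = k} =>
            qvar ^ (l + k + 1) * ∏ j ∈ S.1, qvar ^ (l + 1 + j) := by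
        funext S
        simp only [Function.comp_apply, eqA_apply]
        rw [Finset.prod_insert (zero_not_mem_map_succ _), shift_prod l k S]
        rw [← mul_assoc, ← pow_add]
        congr 2
        omega
      rw [heq]
      exact ih.mul_left _
    have hB : HasSum ((fun T : {S : Finset ℕ // S.card = k + 1} =>
        ∏ j ∈ T.1, qvar ^ (l + 1 + j)) ∘ (↑) : ↥(zeroSet k)ᶜ → LaurentSeries ℂ)
        (qvar ^ (k + 1) * g) := by
      rw [← Equiv.hasSum_iff (eqB k)]
      have heq : (((fun T : {S : Finset ℕ // S.card = k + 1} =>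
          ∏ j ∈ T.1, qvar ^ (l + 1 + j)) ∘ (↑)) ∘ eqB k) =
          fun S : {S : Finset ℕ // S.card = k + 1} =>
            qvar ^ (k + 1) * ∏ j ∈ S.1, qvar ^ (l + 1 + j) := by
        funext S
        simp only [Function.comp_apply, eqB_apply]
        exact shift_prod l (k+1) S
      rw [heq]
      exact hgs.mul_left _
    have htot := hA.add_isCompl isCompl_compl hB
    have huniq : g = qvar ^ (l + k + 1) * Tk + qvar ^ (k + 1) * g := hgs.unique htot
    have hg : g = qvar ^ ((k+1) * (l + 1) + Nat.choose (k+1) 2) / qPoch (k+1) := by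
      have hstep : g * (1 - qvar ^ (k + 1)) = qvar ^ (l + k + 1) * Tk := by
        rw [mul_sub, mul_one]
        nth_rewrite 1 [huniq]
        ring
      rw [hTk] at hstep
      have hne1 : (1 : LaurentSeries ℂ) - qvar ^ (k+1) ≠ 0 := qPoch_factor k
      have hnep : qPoch k ≠ 0 := qPoch_ne_zero k
      have hnep1 : qPoch (k+1) ≠ 0 := qPoch_ne_zero (k+1)
      rw [qPoch_succ]
      rw [eq_div_iff (by exact mul_ne_zero hnep hne1)]
      calc g * (qPoch k * (1 - qvar ^ (k+1)))
          = (g * (1 - qvar ^ (k+1))) * qPoch k := by ring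
        _ = (qvar ^ (l + k + 1) * (qvar ^ (k * (l + 1) + Nat.choose k 2) / qPoch k)) * qPoch k := by
            rw [hstep]
        _ = qvar ^ (l + k + 1) * qvar ^ (k * (l + 1) + Nat.choose k 2) := by
            field_simp
        _ = qvar ^ ((k+1) * (l + 1) + Nat.choose (k+1) 2) := by
            rw [← pow_add]
            congr 1
            rw [Nat.choose_succ_succ, Nat.choose_one_right]
            ring
      done
    rw [← hg]
    exact hgs

lemma coeffPochInf_eq (l k : ℕ) :
    coeffPochInf l k = (-1 : LaurentSeries ℂ) ^ k *
      (qvar ^ (k * (l + 1) + Nat.choose k 2) / qPoch k) := by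
  unfold coeffPochInf
  rw [(hasSumF l k).tsum_eq]

lemma qPoch_zero : qPoch 0 = 1 := by simp [qPoch]

def qb (m n : ℕ) : LaurentSeries ℂ :=
  if n ≤ m then qPoch m / (qPoch n * qPoch (m - n)) else 0

lemma qb_zero (m : ℕ) : qb m 0 = 1 := by
  simp [qb, qPoch_zero, div_self (qPoch_ne_zero m)]

lemma qb_gt {m n : ℕ} (h : m < n) : qb m n = 0 := by
  simp [qb, Nat.not_le.mpr h]

lemma qb_self (m : ℕ) : qb m m = 1 := by
  simp [qb, qPoch_zero, div_self (qPoch_ne_zero m)]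

lemma pascal (s k : ℕ) : qb (s+1) (k+1) = qb s k + qvar^(k+1) * qb s (k+1) := by
  rcases lt_trichotomy (k+1) (s+1) with h | h | h
  · -- k + 1 ≤ s
    have hks : k + 1 ≤ s := by omega
    obtain ⟨d, hd⟩ : ∃ d, s = k + 1 + d := ⟨s - (k+1), by omega⟩
    subst hd
    have e1 : k + 1 + d - k = d + 1 := by omega
    have e2 : k + 1 + d - (k + 1) = d := by omega
    have e3 : k + 1 + d + 1 - (k + 1) = d + 1 := by omega
    rw [qb, qb, qb, if_pos (by omega), if_pos (by omega), if_pos (by omega), e1, e2, e3]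
    rw [show k + 1 + d + 1 = (k + 1 + d) + 1 from rfl, qPoch_succ (k + 1 + d),
      qPoch_succ k, qPoch_succ d]
    have h1 := qPoch_ne_zero k
    have h2 := qPoch_ne_zero d
    have h3 := qPoch_ne_zero (k + 1 + d)
    have h4 := qPoch_factor k
    have h5 := qPoch_factor d
    have h6 := qPoch_factor (k + 1 + d)
    field_simp
    ring_nf
  · -- k = s
    have : k = s := by omega
    subst this
    rw [qb_self, qb_self, qb_gt (by omega), mul_zero, add_zero]
  · rw [qb_gt (by omega), qb_gt (by omega), qb_gt (by omega), mul_zero, add_zero]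

theorem qbinom (s : ℕ) : ∀ x : LaurentSeries ℂ,
    ∏ j ∈ Finset.range s, (1 - qvar^j * x) =
    ∑ k ∈ Finset.range (s+1), (-1)^k * qb s k * qvar^(Nat.choose k 2) * x^k := by
  induction s with
  | zero => intro x; simp [qb, qPoch_zero]
  | succ s ih =>
    intro x
    have lhs1 : ∏ j ∈ Finset.range (s+1), (1 - qvar^j * x) =
        (∑ k ∈ Finset.range (s+1),
          (-1)^k * qb s k * qvar^(Nat.choose k 2) * qvar^k * x^k) * (1 - x) := by
      rw [Finset.prod_range_succ']
      have : ∀ j ∈ Finset.range s, (1 : LaurentSeries ℂ) - qvar^(j+1) * x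
          = 1 - qvar^j * (qvar * x) := by
        intro j _; rw [pow_succ]; ring
      rw [Finset.prod_congr rfl this, ih (qvar * x)]
      have hterm : ∑ k ∈ Finset.range (s+1),
            (-1)^k * qb s k * qvar^(Nat.choose k 2) * (qvar * x)^k
          = ∑ k ∈ Finset.range (s+1),
            (-1)^k * qb s k * qvar^(Nat.choose k 2) * qvar^k * x^k :=
        Finset.sum_congr rfl (fun k _ => by rw [mul_pow]; ring)
      rw [hterm, pow_zero, one_mul]
    rw [lhs1]
    -- name a k := (-1)^k * qb s k * qvar^(C k) * qvar^k
    set a : ℕ → LaurentSeries ℂ :=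
      fun k => (-1)^k * qb s k * qvar^(Nat.choose k 2) * qvar^k with ha
    set b : ℕ → LaurentSeries ℂ :=
      fun k => (-1)^k * qb (s+1) k * qvar^(Nat.choose k 2) with hb
    show (∑ k ∈ Finset.range (s+1), a k * x^k) * (1 - x) =
      ∑ k ∈ Finset.range (s+1+1), b k * x^k
    have hbk : ∀ k, b (k+1) = a (k+1) - a k := by
      intro k
      simp only [ha, hb]
      rw [pascal s k]
      have h2 : Nat.choose (k+1) 2 = Nat.choose k 2 + k := by
        rw [Nat.choose_succ_succ k 1, Nat.choose_one_right, Nat.add_comm]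
      rw [h2, pow_add, pow_succ]
      ring
    rw [Finset.sum_range_succ' (fun k => b k * x^k), Finset.sum_range_succ' (fun k => a k * x^k)]
    have hb0 : b 0 = 1 := by simp [hb, qb_zero]
    have ha0 : a 0 = 1 := by simp [ha, qb_zero]
    have hext : ∑ k ∈ Finset.range s, a (k+1) * x^(k+1)
        = ∑ k ∈ Finset.range (s+1), a (k+1) * x^(k+1) := by
      rw [Finset.sum_range_succ]
      have : a (s+1) = 0 := by simp [ha, qb_gt (Nat.lt_succ_self s)]
      rw [this]; ring
    rw [hb0, ha0, hext]
    have key : ∑ k ∈ Finset.range (s+1), b (k+1) * x^(k+1)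
        = ∑ k ∈ Finset.range (s+1), a (k+1) * x^(k+1)
          - ∑ k ∈ Finset.range (s+1), a k * x^(k+1) := by
      rw [← Finset.sum_sub_distrib]
      apply Finset.sum_congr rfl
      intro k _
      rw [hbk]; ring
    rw [key]
    have hsplit : ∑ k ∈ Finset.range (s+1), a k * x^(k+1)
        = x + ∑ k ∈ Finset.range s, a (k+1) * x^(k+2) := by
      rw [Finset.sum_range_succ' (fun k => a k * x^(k+1)), ha0, one_mul, pow_one, add_comm]
    have hdrop : x * ∑ k ∈ Finset.range (s+1), a (k+1) * x^(k+1)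
        = ∑ k ∈ Finset.range s, a (k+1) * x^(k+2) := by
      rw [Finset.mul_sum]
      have : ∀ k ∈ Finset.range (s+1), x * (a (k+1) * x^(k+1)) = a (k+1) * x^(k+2) := by
        intro k _; rw [pow_succ]; ring
      rw [Finset.sum_congr rfl this, Finset.sum_range_succ]
      have : a (s+1) = 0 := by simp [ha, qb_gt (Nat.lt_succ_self s)]
      rw [this]; ring
    have goal2 : ∑ k ∈ Finset.range (s+1), a k * x^(k+1)
        = x + x * ∑ k ∈ Finset.range (s+1), a (k+1) * x^(k+1) := by
      rw [hsplit, hdrop]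
    rw [goal2]
    ring

def tri (M : ℕ) : ℕ := ∑ j ∈ Finset.range M, (j + 1)

lemma tri_succ (M : ℕ) : tri (M + 1) = tri M + (M + 1) := Finset.sum_range_succ _ M

lemma tri_mul_two (M : ℕ) : 2 * tri M = M * (M + 1) := by
  induction M with
  | zero => simp [tri]
  | succ M ih => rw [tri_succ, Nat.mul_add, ih]; ring

lemma qvar_zpow_ne_zero (n : ℤ) : qvar ^ n ≠ 0 := zpow_ne_zero n qvar_ne_zero

lemma qvar_npow_eq_zpow (n : ℕ) : qvar ^ n = qvar ^ (n : ℤ) := (zpow_natCast qvar n).symm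


lemma qvar_zpow_npow (m : ℤ) (k : ℕ) : (qvar ^ m) ^ k = qvar ^ (m * k) := by
  rw [← zpow_natCast (qvar ^ m) k, ← zpow_mul]

-- inverse pochhammer factor
lemma inv_factor (m : ℕ) :
    (1 : LaurentSeries ℂ) - qvar⁻¹ ^ (m + 1)
      = -qvar ^ (-(m + 1 : ℕ) : ℤ) * (1 - qvar ^ (m + 1)) := by
  have h1 : qvar⁻¹ ^ (m + 1) = qvar ^ (-(m + 1 : ℕ) : ℤ) := by
    rw [← zpow_natCast qvar⁻¹ (m+1), inv_zpow, ← zpow_neg]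
  rw [h1, qvar_npow_eq_zpow (m+1)]
  have h2 : qvar ^ (-(m + 1 : ℕ) : ℤ) * qvar ^ ((m + 1 : ℕ) : ℤ) = 1 := by
    rw [← qvar_zpow_add]
    have h0 : (-((m + 1 : ℕ) : ℤ)) + ((m + 1 : ℕ) : ℤ) = 0 := by ring
    rw [h0, zpow_zero]
  linear_combination -h2

lemma invPoch (M : ℕ) :
    ∏ j ∈ Finset.range M, ((1 : LaurentSeries ℂ) - qvar⁻¹ ^ (j + 1))
      = (-1) ^ M * qvar ^ (-(tri M : ℤ)) * qPoch M := by
  induction M with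
  | zero => simp [tri, qPoch]
  | succ M ih =>
    rw [Finset.prod_range_succ, ih, inv_factor M, qPoch_succ]
    have hm : qvar ^ (-(tri M : ℤ)) * qvar ^ (-((M + 1 : ℕ) : ℤ)) = qvar ^ (-(tri (M+1) : ℤ)) := by
      rw [← qvar_zpow_add]; congr 1; rw [tri_succ]; push_cast; ring
    linear_combination ((-1 : LaurentSeries ℂ)^(M+1) * qPoch M * (1 - qvar^(M+1))) * hm

-- generic term rearrangement
lemma term_eq (k : ℕ) (u v z c w A B C : LaurentSeries ℂ) (hA : A ≠ 0) (hB : B ≠ 0) (hC : C ≠ 0)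
    (h : u * v = z * (c * w)) :
    (-1 : LaurentSeries ℂ)^k * (u / A) * v / B = z * ((-1 : LaurentSeries ℂ)^k * (C / (A * B)) * c * w) / C := by
  have h1 : (-1 : LaurentSeries ℂ)^k * (u / A) * v / B = ((-1 : LaurentSeries ℂ)^k * (u * v)) / (A * B) := by
    field_simp
  rw [h1, h]
  field_simp

theorem stmt2 (L : ℕ) : ∀ s : ℕ,
    (∑ l ∈ Finset.range (s + 1),
      coeffPochInf l (s - l) * qvar ^ ((l : ℤ) * ((l : ℤ) - 2 * (L : ℤ))) / qPoch l) =
    (if s ≤ 2 * L then gaussAt qvar⁻¹ (2 * L) s else 0) := by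
  intro s
  set x : LaurentSeries ℂ := qvar ^ (2 * (L:ℤ) - (s:ℤ) + 1) with hx
  have step1 : (∑ l ∈ Finset.range (s + 1),
      coeffPochInf l (s - l) * qvar ^ ((l : ℤ) * ((l : ℤ) - 2 * (L : ℤ))) / qPoch l)
      = qvar ^ ((s:ℤ) * ((s:ℤ) - 2 * (L:ℤ))) *
          (∏ j ∈ Finset.range s, (1 - qvar ^ j * x)) / qPoch s := by
    rw [qbinom s x, Finset.mul_sum, Finset.sum_div, ← Finset.sum_range_reflect]
    apply Finset.sum_congr rfl
    intro l hl
    have hls : l ≤ s := Nat.lt_succ_iff.mp (Finset.mem_range.mp hl)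
    simp only [Nat.add_sub_cancel]
    have hsub : s - (s - l) = l := by omega
    rw [hsub, coeffPochInf_eq, qb, if_pos hls]
    have hpow : x ^ l = qvar ^ ((2 * (L:ℤ) - (s:ℤ) + 1) * (l : ℤ)) := by
      rw [hx, qvar_zpow_npow]
    have hmain : qvar ^ (l * ((s - l) + 1) + Nat.choose l 2) *
        qvar ^ (((s - l : ℕ) : ℤ) * (((s - l : ℕ) : ℤ) - 2 * (L : ℤ)))
        = qvar ^ ((s:ℤ) * ((s:ℤ) - 2 * (L:ℤ))) * (qvar ^ (Nat.choose l 2) * x ^ l) := by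
      rw [hpow, qvar_npow_eq_zpow (l * ((s - l) + 1) + Nat.choose l 2),
        qvar_npow_eq_zpow (Nat.choose l 2), ← qvar_zpow_add, ← qvar_zpow_add]
      congr 1
      have hc : ((s - l : ℕ) : ℤ) = (s : ℤ) - (l : ℤ) := by omega
      have hc2 : ((l * ((s - l) + 1) + Nat.choose l 2 : ℕ) : ℤ)
          = (l : ℤ) * (((s : ℤ) - (l : ℤ)) + 1) + (Nat.choose l 2 : ℤ) := by
        push_cast [hc]
        ring
      rw [hc2, hc, ← qvar_zpow_add]
      congr 1
      push_cast
      ring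
    exact term_eq l _ _ _ _ _ _ _ _ (qPoch_ne_zero l) (qPoch_ne_zero (s - l))
      (qPoch_ne_zero s) hmain
  rw [step1]
  by_cases hs : s ≤ 2 * L
  · rw [if_pos hs]
    have hprod : ∏ j ∈ Finset.range s, ((1 : LaurentSeries ℂ) - qvar ^ j * x)
        = ∏ j ∈ Finset.range s, (1 - qvar ^ (2 * L - s + j + 1)) := by
      apply Finset.prod_congr rfl
      intro j _
      congr 1
      rw [qvar_npow_eq_zpow j, hx, ← qvar_zpow_add, qvar_npow_eq_zpow (2 * L - s + j + 1)]
      congr 1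
      omega
    have hPoch2L : qPoch (2 * L) = qPoch (2 * L - s) *
        ∏ j ∈ Finset.range s, ((1 : LaurentSeries ℂ) - qvar ^ (2 * L - s + j + 1)) := by
      have h1 : 2 * L = (2 * L - s) + s := by omega
      conv_lhs => rw [h1]
      unfold qPoch
      exact Finset.prod_range_add _ _ _
    unfold gaussAt
    rw [invPoch (2 * L), invPoch s, invPoch (2 * L - s), hprod]
    rw [hPoch2L]
    have hsign : ((-1 : LaurentSeries ℂ)) ^ s * (-1) ^ (2 * L - s) = (-1) ^ (2 * L) := by
      rw [← pow_add]; congr 1; omega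
    rw [← hsign]
    have hexp : qvar ^ (-(tri (2 * L) : ℤ)) = qvar ^ ((s:ℤ) * ((s:ℤ) - 2 * (L:ℤ)))
        * qvar ^ (-(tri s : ℤ)) * qvar ^ (-(tri (2 * L - s) : ℤ)) := by
      rw [← qvar_zpow_add, ← qvar_zpow_add]
      congr 1
      have t1 := tri_mul_two (2 * L)
      have t2 := tri_mul_two s
      have t3 := tri_mul_two (2 * L - s)
      have hc : ((2 * L - s : ℕ) : ℤ) = 2 * (L:ℤ) - (s:ℤ) := by omega
      have t1' : (2 : ℤ) * (tri (2 * L) : ℤ) = (2 * L : ℤ) * ((2 * L : ℤ) + 1) := by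
        exact_mod_cast congrArg (Nat.cast : ℕ → ℤ) t1
      have t2' : (2 : ℤ) * (tri s : ℤ) = (s : ℤ) * ((s : ℤ) + 1) := by
        exact_mod_cast congrArg (Nat.cast : ℕ → ℤ) t2
      have t3' : (2 : ℤ) * (tri (2 * L - s) : ℤ)
          = (2 * (L:ℤ) - s) * ((2 * (L:ℤ) - s) + 1) := by
        have := congrArg (Nat.cast : ℕ → ℤ) t3
        push_cast at this
        rw [hc] at this
        linarith [this]
      nlinarith [t1', t2', t3']
    rw [hexp]
    have h1 := qPoch_ne_zero s
    have h2 := qPoch_ne_zero (2 * L - s)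
    have h3 := qvar_zpow_ne_zero (-(tri s : ℤ))
    have h4 := qvar_zpow_ne_zero (-(tri (2 * L - s) : ℤ))
    have h5 : ((-1 : LaurentSeries ℂ)) ^ s ≠ 0 := by
      apply pow_ne_zero; norm_num
    have h6 : ((-1 : LaurentSeries ℂ)) ^ (2 * L - s) ≠ 0 := by
      apply pow_ne_zero; norm_num
    have h3n : qvar ^ (tri s) ≠ 0 := pow_ne_zero _ qvar_ne_zero
    have h4n : qvar ^ (tri (2 * L - s)) ≠ 0 := pow_ne_zero _ qvar_ne_zero
    field_simp
  · rw [if_neg hs]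
    push_neg at hs
    have hzero : ∏ j ∈ Finset.range s, ((1 : LaurentSeries ℂ) - qvar ^ j * x) = 0 := by
      apply Finset.prod_eq_zero (i := s - 2 * L - 1) (Finset.mem_range.mpr (by omega))
      rw [qvar_npow_eq_zpow, hx, ← qvar_zpow_add]
      have h0 : ((s - 2 * L - 1 : ℕ) : ℤ) + (2 * (L:ℤ) - (s:ℤ) + 1) = 0 := by omega
      rw [h0, zpow_zero, sub_self]
    rw [hzero, mul_zero, zero_div]
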